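/- Let G be any finite simple graph and G' the graph obtained by attaching a whisker at every vertex of G. Then the closed neighborhood ideal NI(G') is minimally generated by the monomials xᵢyᵢ for i = 1,…,n; in particular NI(G') = ⟨x₁y₁,…,xₙyₙ⟩. -/
import Mathlib


open MvPolynomial

variable {V : Type*}

/-- A finite matching of a simple graph: a finset of edges that are pairwise disjoint. -/
def SimpleGraph.IsMatchingFinset (G : SimpleGraph V) (M : Finset (Sym2 V)) : Prop :=
  (∀ e ∈ M, e ∈ G.edgeSet) ∧
    ∀ e ∈ M, ∀ f ∈ M, e ≠ f → ∀ v : V, v ∈ e → v ∉ f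

/-- The matching number: maximum size of a matching. -/
noncomputable def SimpleGraph.matchingNumber (G : SimpleGraph V) : ℕ :=
  sSup {n | ∃ M : Finset (Sym2 V), G.IsMatchingFinset M ∧ M.card = n}


/-- The closed neighborhood ideal of a graph: generated by the monomials
`∏_{v ∈ N[w]} X v` over all vertices `w`. -/
noncomputable def closedNbhdIdeal (K : Type*) [Field K] (G : SimpleGraph V)
    [Fintype V] [DecidableEq V] [DecidableRel G.Adj] : Ideal (MvPolynomial V K) :=
  Ideal.span {m | ∃ w : V, m = ∏ v ∈ insert w (G.neighborFinset w), X v}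


/-- The graph obtained from `G` by attaching a whisker at every vertex:
the vertex `Sum.inl a` is the original vertex `xₐ` and `Sum.inr a` is the new
pendant vertex `yₐ` attached to it. -/
def whisker (G : SimpleGraph V) : SimpleGraph (V ⊕ V) :=
  SimpleGraph.fromRel (fun p q =>
    (∃ a b : V, p = Sum.inl a ∧ q = Sum.inl b ∧ G.Adj a b) ∨
      (∃ a : V, p = Sum.inl a ∧ q = Sum.inr a))

theorem closedNbhdIdeal_whisker (K : Type*) [Field K] (G : SimpleGraph V)
    [Fintype V] [DecidableEq V] [DecidableRel (whisker G).Adj] :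
    closedNbhdIdeal K (whisker G) =
      Ideal.span {m | ∃ i : V, m = X (Sum.inl i) * X (Sum.inr i)} ∧
    ∀ i : V, (X (Sum.inl i) * X (Sum.inr i) : MvPolynomial (V ⊕ V) K) ∉
      Ideal.span {m | ∃ j : V, j ≠ i ∧ m = X (Sum.inl j) * X (Sum.inr j)} := by
  have adj_inl_inr : ∀ a : V, (whisker G).Adj (Sum.inl a) (Sum.inr a) := by
    intro a
    simp [whisker, SimpleGraph.fromRel_adj]
  have adj_inr : ∀ (a : V) (q : V ⊕ V), (whisker G).Adj (Sum.inr a) q ↔ q = Sum.inl a := by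
    intro a q
    constructor
    · intro h
      rw [whisker, SimpleGraph.fromRel_adj] at h
      obtain ⟨hne, h | h⟩ := h
      · rcases h with ⟨b, c, h1, _, _⟩ | ⟨b, h1, _⟩ <;> exact absurd h1 (by simp)
      · rcases h with ⟨b, c, _, h2, _⟩ | ⟨b, h1, h2⟩
        · exact absurd h2 (by simp)
        · cases h2; exact h1
    · rintro rfl
      exact ((whisker G).adj_symm (adj_inl_inr a))
  have key : ∀ (w : V ⊕ V) (a : V), (w = Sum.inl a ∨ w = Sum.inr a) →
      (∏ v ∈ insert w ((whisker G).neighborFinset w), (X v : MvPolynomial (V ⊕ V) K)) ∈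
        Ideal.span {m | ∃ i : V, m = X (Sum.inl i) * X (Sum.inr i)} := by
    intro w a hw
    have hsub : ({Sum.inl a, Sum.inr a} : Finset (V ⊕ V)) ⊆
        insert w ((whisker G).neighborFinset w) := by
      intro v hv
      simp only [Finset.mem_insert, Finset.mem_singleton] at hv
      rcases hw with rfl | rfl <;> rcases hv with rfl | rfl
      · simp
      · simp [SimpleGraph.mem_neighborFinset, adj_inl_inr a]
      · simp [SimpleGraph.mem_neighborFinset, adj_inr]
      · simp
    have hdvd : (X (Sum.inl a) * X (Sum.inr a) : MvPolynomial (V ⊕ V) K) ∣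
        ∏ v ∈ insert w ((whisker G).neighborFinset w), X v := by
      have : (X (Sum.inl a) * X (Sum.inr a) : MvPolynomial (V ⊕ V) K) =
          ∏ v ∈ ({Sum.inl a, Sum.inr a} : Finset (V ⊕ V)), X v := by simp
      rw [this]
      exact Finset.prod_dvd_prod_of_subset _ _ _ hsub
    obtain ⟨t, ht⟩ := hdvd
    rw [ht]
    exact Ideal.mul_mem_right _ _ (Ideal.subset_span ⟨a, rfl⟩)
  constructor
  · apply le_antisymm
    · rw [closedNbhdIdeal, Ideal.span_le]
      rintro m ⟨w, rfl⟩
      obtain a | a := w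
      · exact key _ a (Or.inl rfl)
      · exact key _ a (Or.inr rfl)
    · rw [Ideal.span_le]
      rintro m ⟨i, rfl⟩
      have hnb : (whisker G).neighborFinset (Sum.inr i) = {Sum.inl i} := by
        ext q
        simp [SimpleGraph.mem_neighborFinset, adj_inr]
      have : (X (Sum.inl i) * X (Sum.inr i) : MvPolynomial (V ⊕ V) K) =
          ∏ v ∈ insert (Sum.inr i) ((whisker G).neighborFinset (Sum.inr i)), X v := by
        rw [hnb]
        simp [mul_comm]
      rw [this]
      exact Ideal.subset_span ⟨Sum.inr i, rfl⟩
  · intro i hi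
    set σ : V ⊕ V → K := fun v => if v = Sum.inl i ∨ v = Sum.inr i then 1 else 0 with hσ
    have hle : Ideal.span {m | ∃ j : V, j ≠ i ∧ m = X (Sum.inl j) * X (Sum.inr j)} ≤
        RingHom.ker (eval σ : MvPolynomial (V ⊕ V) K →+* K) := by
      rw [Ideal.span_le]
      rintro m ⟨j, hj, rfl⟩
      simp only [SetLike.mem_coe, RingHom.mem_ker, map_mul, eval_X, hσ]
      have h1 : (Sum.inl j : V ⊕ V) ≠ Sum.inl i := by simp [hj]
      have h2 : (Sum.inl j : V ⊕ V) ≠ Sum.inr i := by simp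
      simp [h1, h2]
    have := hle hi
    rw [RingHom.mem_ker, map_mul, eval_X, eval_X, hσ] at this
    simp at this
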